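/- arXiv:2303.11185 — 3 statements merged into one kernel-verified Lean document; each statement's English description precedes it below -/
import Mathlib

section
/- For 0 ≤ k, m < 2^n, the entry of G_N = G_2^{⊗n} in row k and column m equals the evaluation of the monomial ∏_{j : b_{k,j} = 0} z_j at the point z = b_{N-m-1}, where b_i denotes the binary representation of i and N = 2^n. -/
/-- The polar kernel `G₂ = [[1,0],[1,1]]` over `F₂`. -/
def G2 : Matrix (Fin 2) (Fin 2) (ZMod 2) := !![1, 0; 1, 1]

/-- The `n`-th Kronecker power `G_N = G₂^{⊗n}`, with rows and columns indexed by
length-`n` bit vectors. -/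
def GN (n : ℕ) : Matrix (Fin n → Fin 2) (Fin n → Fin 2) (ZMod 2) :=
  Matrix.of fun k m => ∏ j, G2 (k j) (m j)

/-- The binary representation `b_k` of `k` as a length-`n` vector of `Fin 2`. -/
def bitVec (n k : ℕ) : Fin n → Fin 2 := fun j => if k.testBit j then 1 else 0

/-- the entry of `G_N = G₂^{⊗n}` in row `k` and column `m` equals the
evaluation of the monomial `∏_{j : b_{k,j} = 0} z_j` at `z = b_{N-m-1}`, `N = 2^n`. -/
theorem entry_eq_monomial_eval (n k m : ℕ) (hk : k < 2 ^ n) (hm : m < 2 ^ n) :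
    GN n (bitVec n k) (bitVec n m)
      = ∏ j ∈ Finset.univ.filter (fun j : Fin n => ¬ k.testBit j),
          (if (2 ^ n - m - 1).testBit j then (1 : ZMod 2) else 0) := by
  have hsub : 2 ^ n - m - 1 = 2 ^ n - (m + 1) := by omega
  rw [GN, Matrix.of_apply, Finset.prod_filter]
  apply Finset.prod_congr rfl
  intro j _
  have hbit : (2 ^ n - m - 1).testBit j = (decide ((j : ℕ) < n) && !m.testBit j) := by
    rw [hsub, Nat.testBit_two_pow_sub_succ hm]
  have hjn : (j : ℕ) < n := j.isLt
  simp only [hbit, hjn, decide_true, Bool.true_and]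
  unfold bitVec G2
  rcases hK : k.testBit j <;> rcases hM : m.testBit j <;>
    simp [hK, hM, Matrix.cons_val_zero, Matrix.cons_val_one]
end

section
/- The maximum number D of dynamic frozen bits for the Reed–Muller code R(r,n) under the complement-pairing constraint equals the number of indices i with w(b_i) < n−r, b_{i,n-1} = 1, and n − w(b_i) ≥ n−r, which equals the sum over 1 ≤ t ≤ min(n−r−1, r) of binomial(n−1, t−1). -/
/-- The binary representation `b_k` of `k` as a vector in `F₂ⁿ`. -/
def bitVecZ (n k : ℕ) : Fin n → ZMod 2 := fun j => if k.testBit j then 1 else 0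

/-- The Hamming weight of a vector in `F₂ⁿ`. -/
def wt {n : ℕ} (v : Fin n → ZMod 2) : ℕ := (Finset.univ.filter fun j => v j = 1).card

/-- The dynamic frozen indices of `R(r,n)` under the complement-pairing constraint:
frozen (`w(b_i) < n−r`), last bit `1`, and complement weight `n − w(b_i) ≥ n−r`. -/
def dynSet (n r : ℕ) : Finset ℕ :=
  (Finset.range (2 ^ n)).filter fun i =>
    wt (bitVecZ n i) < n - r ∧ i.testBit (n - 1) ∧ n - r ≤ n - wt (bitVecZ n i)

lemma testBit_eq_mem_bitIndices (n : ℕ) : ∀ k, n.testBit k = decide (k ∈ n.bitIndices) := by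
  induction n using Nat.binaryRec with
  | zero => simp
  | bit b n ih =>
    intro k
    have h2 : (2 * n + 1) / 2 = n := by omega
    cases b
    · rw [Nat.bit_false, Nat.bitIndices_two_mul]
      cases k with
      | zero => simp [Nat.testBit_succ]
      | succ k => simp [Nat.testBit_succ, Nat.mul_div_cancel_left, -Nat.mem_bitIndices, ih]
    · rw [Nat.bit_true, Nat.bitIndices_two_mul_add_one]
      cases k with
      | zero => simp [Nat.testBit_zero]
      | succ k => simp [Nat.testBit_succ, h2, -Nat.mem_bitIndices, ih]

lemma testBit_sum_two_pow (S : Finset ℕ) (k : ℕ) :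
    (∑ i ∈ S, 2 ^ i).testBit k = decide (k ∈ S) := by
  have h := Finset.toFinset_bitIndices_twoPowSum S
  rw [testBit_eq_mem_bitIndices]
  have : k ∈ (∑ i ∈ S, 2 ^ i).bitIndices ↔ k ∈ S := by
    conv_rhs => rw [← h]
    rw [List.mem_toFinset]
  simp [this]

lemma sum_range_two_pow_lt (n : ℕ) : ∑ j ∈ Finset.range n, 2 ^ j < 2 ^ n := by
  induction n with
  | zero => simp
  | succ n ih => rw [Finset.sum_range_succ]; have := Nat.pow_pos (n := n) (by norm_num : 0 < 2); omega

lemma card_filter_mem_card_eq {α : Type*} [DecidableEq α] [Fintype α] (a : α) (t : ℕ)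
    (ht : 1 ≤ t) :
    ((Finset.univ : Finset (Finset α)).filter fun S => a ∈ S ∧ S.card = t).card
      = (Fintype.card α - 1).choose (t - 1) := by
  rw [show (Fintype.card α - 1).choose (t-1)
      = ((Finset.univ.erase a).powersetCard (t-1)).card by
    rw [Finset.card_powersetCard, Finset.card_erase_of_mem (Finset.mem_univ a),
      Finset.card_univ]]
  refine Finset.card_bij' (fun S _ => S.erase a) (fun T _ => insert a T) ?_ ?_ ?_ ?_
  · intro S hS
    simp only [Finset.mem_filter] at hS
    rw [Finset.mem_powersetCard]
    exact ⟨Finset.erase_subset_erase a (Finset.subset_univ S),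
      by rw [Finset.card_erase_of_mem hS.2.1, hS.2.2]⟩
  · intro T hT
    rw [Finset.mem_powersetCard] at hT
    have haT : a ∉ T := fun h => (Finset.notMem_erase a _) (hT.1 h)
    simp only [Finset.mem_filter, Finset.mem_univ, true_and]
    exact ⟨Finset.mem_insert_self a T, by rw [Finset.card_insert_of_notMem haT, hT.2]; omega⟩
  · intro S hS
    simp only [Finset.mem_filter] at hS
    exact Finset.insert_erase hS.2.1
  · intro T hT
    rw [Finset.mem_powersetCard] at hT
    exact Finset.erase_insert (fun h => (Finset.notMem_erase a _) (hT.1 h))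

/-- the maximum number `D` of dynamic frozen bits of `R(r,n)` under the
complement-pairing constraint equals `∑_{t=1}^{min(n−r−1, r)} C(n−1, t−1)`. -/
theorem count_dynamic_frozen_bits (n r : ℕ) (hn : 1 ≤ n) (hr : r ≤ n - 1) :
    (dynSet n r).card
      = ∑ t ∈ Finset.Icc 1 (min (n - r - 1) r), Nat.choose (n - 1) (t - 1) := by
  classical
  set m := min (n - r - 1) r with hm
  set a : Fin n := ⟨n - 1, by omega⟩ with ha
  set F : ℕ → Finset (Fin n) := fun i => Finset.univ.filter fun j : Fin n => i.testBit j with hF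
  set G : Finset (Fin n) → ℕ := fun S => ∑ j ∈ S, 2 ^ (j : ℕ) with hG
  have hwt : ∀ i, wt (bitVecZ n i) = (F i).card := by
    intro i
    unfold wt
    congr 1
    apply Finset.filter_congr
    intro j _
    unfold bitVecZ
    by_cases h : i.testBit j <;> simp [h]
  have hGmap : ∀ S : Finset (Fin n), G S = ∑ j ∈ S.map ⟨Fin.val, Fin.val_injective⟩, 2 ^ j := by
    intro S; rw [Finset.sum_map]; rfl
  have hGbit : ∀ (S : Finset (Fin n)) (k : ℕ), (G S).testBit k = decide (∃ j ∈ S, (j : ℕ) = k) := by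
    intro S k
    rw [hGmap, testBit_sum_two_pow]
    simp
  have hcardn : ∀ S : Finset (Fin n), S.card ≤ n := fun S => by
    simpa using Finset.card_le_univ S
  set T : Finset (Finset (Fin n)) :=
    Finset.univ.filter (fun S => a ∈ S ∧ S.card ≤ m) with hT
  have hmain : (dynSet n r).card = T.card := by
    refine Finset.card_nbij' F G ?_ ?_ ?_ ?_
    · intro i hi
      simp only [Finset.mem_coe, dynSet, Finset.mem_filter, Finset.mem_range] at hi
      obtain ⟨hlt, h1, h2, h3⟩ := hi
      rw [hwt] at h1 h3
      have hc := hcardn (F i)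
      simp only [Finset.mem_coe, hT, Finset.mem_filter, Finset.mem_univ, true_and]
      constructor
      · simp [hF, ha, h2]
      · omega
    · intro S hS
      simp only [Finset.mem_coe, hT, Finset.mem_filter, Finset.mem_univ, true_and] at hS
      obtain ⟨haS, hcard⟩ := hS
      have hGlt : G S < 2 ^ n := by
        calc G S ≤ ∑ j ∈ (Finset.univ : Finset (Fin n)), 2 ^ (j : ℕ) :=
              Finset.sum_le_sum_of_subset (Finset.subset_univ S)
          _ = ∑ j ∈ Finset.range n, 2 ^ j := Fin.sum_univ_eq_sum_range _ _
          _ < 2 ^ n := sum_range_two_pow_lt n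
      have hFG : F (G S) = S := by
        ext j
        simp only [hF, Finset.mem_filter, Finset.mem_univ, true_and, hGbit, decide_eq_true_eq]
        constructor
        · rintro ⟨j', hj', hval⟩; rwa [← Fin.val_injective hval]
        · intro hj; exact ⟨j, hj, rfl⟩
      have hwtG : wt (bitVecZ n (G S)) = S.card := by rw [hwt, hFG]
      have hbit : (G S).testBit (n - 1) = true := by
        rw [hGbit]; simp only [decide_eq_true_eq]; exact ⟨a, haS, rfl⟩
      have hc := hcardn S
      have hc1 : 1 ≤ S.card := Finset.card_pos.mpr ⟨a, haS⟩
      simp only [Finset.mem_coe, dynSet, Finset.mem_filter, Finset.mem_range]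
      exact ⟨hGlt, by rw [hwtG]; omega, hbit, by rw [hwtG]; omega⟩
    · intro i hi
      simp only [Finset.mem_coe, dynSet, Finset.mem_filter, Finset.mem_range] at hi
      apply Nat.eq_of_testBit_eq
      intro k
      rw [hGbit]
      have hiff : (∃ j ∈ F i, (j : ℕ) = k) ↔ i.testBit k = true := by
        constructor
        · rintro ⟨j, hj, rfl⟩
          simpa [hF] using hj
        · intro hb
          have hk : k < n := by
            by_contra hk
            have : i.testBit k = false := Nat.testBit_eq_false_of_lt
              (lt_of_lt_of_le hi.1 (Nat.pow_le_pow_right (by norm_num) (by omega)))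
            simp [this] at hb
          exact ⟨⟨k, hk⟩, by simp [hF, hb], rfl⟩
      simp [hiff]
    · intro S hS
      simp only [Finset.mem_coe, hT, Finset.mem_filter, Finset.mem_univ, true_and] at hS
      ext j
      simp only [hF, Finset.mem_filter, Finset.mem_univ, true_and, hGbit, decide_eq_true_eq]
      constructor
      · rintro ⟨j', hj', hval⟩; rwa [← Fin.val_injective hval]
      · intro hj; exact ⟨j, hj, rfl⟩
  rw [hmain]
  have hTsplit : T = (Finset.Icc 1 m).biUnion
      (fun t => Finset.univ.filter fun S : Finset (Fin n) => a ∈ S ∧ S.card = t) := by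
    ext S
    simp only [hT, Finset.mem_filter, Finset.mem_univ, true_and, Finset.mem_biUnion,
      Finset.mem_Icc]
    constructor
    · rintro ⟨haS, hc⟩
      exact ⟨S.card, ⟨Finset.card_pos.mpr ⟨a, haS⟩, hc⟩, haS, rfl⟩
    · rintro ⟨t, ⟨ht1, ht2⟩, haS, rfl⟩
      exact ⟨haS, ht2⟩
  rw [hTsplit, Finset.card_biUnion]
  · apply Finset.sum_congr rfl
    intro t ht
    rw [Finset.mem_Icc] at ht
    rw [card_filter_mem_card_eq a t ht.1, Fintype.card_fin]
  · intro s hs t ht hst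
    simp only [Finset.disjoint_left, Finset.mem_filter, Finset.mem_univ, true_and]
    rintro S ⟨_, h2⟩ ⟨_, h4⟩
    exact hst (h2.symm.trans h4)
end

section
/- Suppose V and V_T = V·(G_N·T^{-1}·G_N)ᵀ have the same row space over F_2, where T is a permutation matrix. Then the polar subcode C = { u·G_N : V·uᵀ = 0 } is invariant under the permutation given by T, i.e., x·T ∈ C for all x ∈ C. -/
/-- `A` is a permutation matrix over `F₂`. -/
def IsPermMatrix {ι : Type*} [DecidableEq ι] (A : Matrix ι ι (ZMod 2)) : Prop :=
  ∃ σ : Equiv.Perm ι, ∀ i j, A i j = if j = σ i then 1 else 0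

/-- The polar subcode `{ u·G_N : V·uᵀ = 0 }` defined by a constraint matrix `V`. -/
def polarSubcode (n K : ℕ) (V : Matrix (Fin (2 ^ n - K)) (Fin n → Fin 2) (ZMod 2)) :
    Set ((Fin n → Fin 2) → ZMod 2) :=
  {x | ∃ u, V.mulVec u = 0 ∧ x = Matrix.vecMul u (GN n)}

lemma G2_mul_G2 : G2 * G2 = 1 := by decide

lemma GN_mul_GN (n : ℕ) : GN n * GN n = 1 := by
  ext k m
  simp only [Matrix.mul_apply, GN, Matrix.of_apply, ← Finset.prod_mul_distrib]
  rw [← Fintype.piFinset_univ,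
    ← Finset.prod_univ_sum (fun _ : Fin n => (Finset.univ : Finset (Fin 2)))
      (fun j a => G2 (k j) a * G2 a (m j))]
  have : ∀ j : Fin n, (∑ a : Fin 2, G2 (k j) a * G2 a (m j)) = (1 : Matrix (Fin 2) (Fin 2) (ZMod 2)) (k j) (m j) := by
    intro j; rw [← G2_mul_G2, Matrix.mul_apply]
  simp only [this, Matrix.one_apply]
  rw [Finset.prod_boole]
  simp [funext_iff]

/-- if `V` and `V_T = V·(G_N·T⁻¹·G_N)ᵀ` have the same row space, then the
polar subcode defined by `V` is invariant under the permutation given by `T`. -/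
theorem stable_constraint_gives_automorphism (n K : ℕ)
    (V : Matrix (Fin (2 ^ n - K)) (Fin n → Fin 2) (ZMod 2))
    (T Tinv : Matrix (Fin n → Fin 2) (Fin n → Fin 2) (ZMod 2))
    (hT : IsPermMatrix T) (hTl : T * Tinv = 1) (hTr : Tinv * T = 1)
    (hspan : Submodule.span (ZMod 2) (Set.range V)
      = Submodule.span (ZMod 2) (Set.range (V * (GN n * Tinv * GN n).transpose))) :
    ∀ x ∈ polarSubcode n K V, Matrix.vecMul x T ∈ polarSubcode n K V := by
  rintro x ⟨u, hu, rfl⟩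
  set u' := Matrix.vecMul u (GN n * T * GN n) with hu'
  have hMM : (GN n * T * GN n) * (GN n * Tinv * GN n) = 1 := by
    simp only [Matrix.mul_assoc]
    rw [← Matrix.mul_assoc (GN n) (GN n), GN_mul_GN, Matrix.one_mul,
      ← Matrix.mul_assoc T Tinv, hTl, Matrix.one_mul, GN_mul_GN]
  refine ⟨u', ?_, ?_⟩
  · have hback : Matrix.vecMul u' (GN n * Tinv * GN n) = u := by
      rw [hu', Matrix.vecMul_vecMul, hMM, Matrix.vecMul_one]
    have hVT : (V * (GN n * Tinv * GN n).transpose).mulVec u' = 0 := by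
      rw [← Matrix.mulVec_mulVec, Matrix.mulVec_transpose, hback, hu]
    let f : ((Fin n → Fin 2) → ZMod 2) →ₗ[ZMod 2] ZMod 2 :=
      { toFun := fun w => dotProduct w u',
        map_add' := fun a b => add_dotProduct a b u',
        map_smul' := fun c a => smul_dotProduct c a u' }
    have hle : Submodule.span (ZMod 2) (Set.range V) ≤ LinearMap.ker f := by
      rw [hspan, Submodule.span_le]
      rintro _ ⟨i, rfl⟩
      exact congrFun hVT i
    funext i
    exact hle (Submodule.subset_span ⟨i, rfl⟩)
  · rw [hu', Matrix.vecMul_vecMul, Matrix.vecMul_vecMul, Matrix.mul_assoc,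
      Matrix.mul_assoc, GN_mul_GN, Matrix.mul_one]
end
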